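/- For any admissible enumeration (χ_{F_i})_{i=0}^∞ of the node functions B = {χ_F : F ∈ S_α}, the sequence (χ_{F_i}) is a monotone Schauder basis for C(ω^{ω^α}), identified with the space C(S_α) of continuous functions on the compact space S_α ⊆ {0,1}^ℕ of Schreier sets with the pointwise topology. -/

import Mathlib

open scoped Classical

/-- The first uncountable ordinal `ω₁`. -/
noncomputable def omega1 : Ordinal := (Cardinal.aleph 1).ord

/-- `S, A` form a Schreier system: `S α` is the Schreier family of finite subsets
of `ℕ` (defined by the usual transfinite recursion, where at each countable limit
ordinal `α` the fixed increasing sequence `A α : ℕ → Ordinal` converging to `α`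
is used). -/
def SchreierSystem (S : Ordinal → Set (Finset ℕ)) (A : Ordinal → ℕ → Ordinal) : Prop :=
  (S 0 = {F | ∃ n : ℕ, 1 ≤ n ∧ F = {n}} ∪ {∅}) ∧
  (S 1 = {F | ∀ n ∈ F, F.card ≤ n}) ∧
  (∀ α : Ordinal, α + 1 < omega1 →
    S (α + 1) = {F | ∃ (k : ℕ) (Fs : Fin k → Finset ℕ),
      (∀ i, Fs i ∈ S α) ∧
      (∀ i j : Fin k, i < j → ∀ a ∈ Fs i, ∀ b ∈ Fs j, a < b) ∧
      (∀ i, ∀ a ∈ Fs i, k ≤ a) ∧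
      F = Finset.univ.biUnion Fs}) ∧
  (∀ α : Ordinal, α < omega1 → Order.IsSuccLimit α →
    StrictMono (A α) ∧ (∀ n : ℕ, A α n < α) ∧ (∀ β < α, ∃ n : ℕ, β ≤ A α n) ∧
    S α = {F | ∃ n : ℕ, F ∈ S (A α n) ∧ ∀ a ∈ F, n ≤ a})

/-- `F ≼ G`: `F` is an initial segment of `G`, i.e. `G ∩ {1,…,max F} = F`. -/
def FinsetInitSeg (F G : Finset ℕ) : Prop :=
  F ⊆ G ∧ ∀ n ∈ G, n ∉ F → ∀ m ∈ F, m < n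

/-- `S_α`, identified with `{1_F : F ∈ S_α} ⊆ {0,1}^ℕ`, carries the topology of
pointwise convergence; it is homeomorphic to the ordinal interval `[1, ω^{ω^α}]`,
so bounded continuous functions on it form the space `C(ω^{ω^α})`. -/
instance schreierTop (Sa : Set (Finset ℕ)) : TopologicalSpace {F : Finset ℕ // F ∈ Sa} :=
  TopologicalSpace.induced (fun F => (fun n => (decide (n ∈ F.1) : Bool))) inferInstance

namespace NB


lemma initseg_refl (F : Finset ℕ) : FinsetInitSeg F F :=
  ⟨Finset.Subset.refl F, fun n hn hn' _ _ => absurd hn hn'⟩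

lemma initseg_empty (F : Finset ℕ) : FinsetInitSeg ∅ F :=
  ⟨Finset.empty_subset F, fun _ _ _ m hm => absurd hm (Finset.notMem_empty m)⟩

lemma initseg_trans {F G H : Finset ℕ} (h1 : FinsetInitSeg F G) (h2 : FinsetInitSeg G H) :
    FinsetInitSeg F H := by
  refine ⟨h1.1.trans h2.1, fun n hn hnF m hm => ?_⟩
  by_cases hG : n ∈ G
  · exact h1.2 n hG hnF m hm
  · exact h2.2 n hn hG m (h1.1 hm)

lemma initseg_of_subset {F G H : Finset ℕ} (h1 : FinsetInitSeg F H) (hFG : F ⊆ G)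
    (hGH : G ⊆ H) : FinsetInitSeg F G :=
  ⟨hFG, fun n hn hnF m hm => h1.2 n (hGH hn) hnF m hm⟩

lemma initseg_comp {F G H : Finset ℕ} (h1 : FinsetInitSeg F H) (h2 : FinsetInitSeg G H) :
    FinsetInitSeg F G ∨ FinsetInitSeg G F := by
  by_cases hFG : F ⊆ G
  · exact Or.inl (initseg_of_subset h1 hFG h2.1)
  · have hGF : G ⊆ F := by
      intro b hb
      by_contra hbF
      obtain ⟨a, haF, haG⟩ := Finset.not_subset.mp hFG
      have h1' : b < a := h2.2 a (h1.1 haF) haG b hb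
      have h2' : a < b := h1.2 b (h2.1 hb) hbF a haF
      omega
    exact Or.inr (initseg_of_subset h2 hGF h1.1)

lemma initseg_inter {B F H : Finset ℕ} (h1 : FinsetInitSeg H F) (hB : B ⊆ F) :
    FinsetInitSeg (B ∩ H) B := by
  refine ⟨Finset.inter_subset_left, fun n hn hn' m hm => ?_⟩
  have hnH : n ∉ H := fun hH => hn' (Finset.mem_inter.mpr ⟨hn, hH⟩)
  exact h1.2 n (hB hn) hnH m (Finset.mem_inter.mp hm).2

lemma initseg_inter_range (G : Finset ℕ) (M : ℕ) :
    FinsetInitSeg (G ∩ Finset.range M) G := by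
  refine ⟨Finset.inter_subset_left, fun n hn hn' m hm => ?_⟩
  obtain ⟨hmG, hmr⟩ := Finset.mem_inter.mp hm
  have : n ∉ Finset.range M := fun hr => hn' (Finset.mem_inter.mpr ⟨hn, hr⟩)
  simp only [Finset.mem_range] at hmr this
  omega

lemma erase_max_initseg {G : Finset ℕ} (hG : G.Nonempty) :
    FinsetInitSeg (G.erase (G.max' hG)) G := by
  refine ⟨Finset.erase_subset _ _, fun n hn hn' m hm => ?_⟩
  have hn'' : n = G.max' hG := by
    by_contra hne
    exact hn' (Finset.mem_erase.mpr ⟨hne, hn⟩)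
  obtain ⟨hme, hmG⟩ := Finset.mem_erase.mp hm
  have := Finset.le_max' G m hmG
  omega

lemma initseg_erase_max {F G : Finset ℕ} (h1 : FinsetInitSeg F G) (hne : F ≠ G)
    (hG : G.Nonempty) : FinsetInitSeg F (G.erase (G.max' hG)) := by
  obtain ⟨b, hbG, hbF⟩ := Finset.not_subset.mp (fun hsub => hne (Finset.Subset.antisymm h1.1 hsub))
  have hmaxF : G.max' hG ∉ F := by
    intro hmF
    have h1' : G.max' hG < b := h1.2 b hbG hbF _ hmF
    have := Finset.le_max' G b hbG
    omega
  refine ⟨fun m hm => Finset.mem_erase.mpr ⟨fun he => hmaxF (he ▸ hm), h1.1 hm⟩,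
    fun n hn hn' m hm => h1.2 n (Finset.mem_erase.mp hn).2 hn' m hm⟩

lemma initseg_antisymm {F G : Finset ℕ} (h1 : FinsetInitSeg F G) (h2 : FinsetInitSeg G F) :
    F = G := Finset.Subset.antisymm h1.1 h2.1


/-- hereditariness plus nonemptiness -/
lemma hered {S : Ordinal → Set (Finset ℕ)} {A : Ordinal → ℕ → Ordinal}
    (h : SchreierSystem S A) :
    ∀ α : Ordinal, α < omega1 →
      (∅ ∈ S α) ∧ (∀ F ∈ S α, ∀ G, FinsetInitSeg G F → G ∈ S α) := by
  intro α
  induction α using Ordinal.induction with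
  | h α IH =>
    intro hα
    rcases Ordinal.zero_or_succ_or_isSuccLimit α with h0 | ⟨β, hβ⟩ | hlim
    · subst h0
      rw [h.1]
      constructor
      · exact Or.inr rfl
      · rintro F (⟨n, hn1, rfl⟩ | hF) G hG
        · rcases Finset.subset_singleton_iff.mp hG.1 with rfl | rfl
          · exact Or.inr rfl
          · exact Or.inl ⟨n, hn1, rfl⟩
        · simp only [Set.mem_singleton_iff] at hF
          subst hF
          have : G = ∅ := Finset.subset_empty.mp hG.1
          subst this
          exact Or.inr rfl
    · have hβ' : α = β + 1 := by rw [← hβ, Ordinal.add_one_eq_succ]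
      subst hβ'
      have hβlt : β < β + 1 := by rw [Ordinal.add_one_eq_succ]; exact Order.lt_succ β
      have hβω : β < omega1 := hβlt.trans hα
      obtain ⟨hemp, hher⟩ := IH β hβlt hβω
      rw [h.2.2.1 β hα]
      constructor
      · exact ⟨0, Fin.elim0, (fun i => i.elim0), (fun i => i.elim0), (fun i => i.elim0), by simp⟩
      · rintro F ⟨k, Fs, h1, h2, h3, rfl⟩ G hG
        refine ⟨k, fun i => Fs i ∩ G, fun i => ?_, ?_, ?_, ?_⟩
        · refine hher (Fs i) (h1 i) _ (initseg_inter hG ?_)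
          intro a ha
          exact Finset.mem_biUnion.mpr ⟨i, Finset.mem_univ i, ha⟩
        · intro i j hij a ha b hb
          exact h2 i j hij a (Finset.mem_inter.mp ha).1 b (Finset.mem_inter.mp hb).1
        · intro i a ha
          exact h3 i a (Finset.mem_inter.mp ha).1
        · ext a
          simp only [Finset.mem_biUnion, Finset.mem_univ, true_and, Finset.mem_inter]
          constructor
          · intro haG
            obtain ⟨i, _, hi⟩ := Finset.mem_biUnion.mp (hG.1 haG)
            exact ⟨i, hi, haG⟩
          · rintro ⟨i, _, haG⟩
            exact haG
    · obtain ⟨hmono, hlt, hcof, hSeq⟩ := h.2.2.2 α hα hlim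
      rw [hSeq]
      constructor
      · exact ⟨0, (IH (A α 0) (hlt 0) ((hlt 0).trans hα)).1, by simp⟩
      · rintro F ⟨n, hFn, hmin⟩ G hG
        exact ⟨n, (IH (A α n) (hlt n) ((hlt n).trans hα)).2 F hFn G hG,
          fun a ha => hmin a (hG.1 ha)⟩



/-- the initial segment `{x 0, …, x (m-1)}` of the sequence `x`. -/
def seg (x : ℕ → ℕ) (m : ℕ) : Finset ℕ := (Finset.range m).image x

lemma mem_seg {x : ℕ → ℕ} {m a : ℕ} : a ∈ seg x m ↔ ∃ i < m, x i = a := by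
  simp [seg]

lemma mem_seg_iff {x : ℕ → ℕ} (hx : StrictMono x) {m i : ℕ} :
    x i ∈ seg x m ↔ i < m := by
  rw [mem_seg]
  constructor
  · rintro ⟨i', hi', he⟩
    rwa [hx.injective he] at hi'
  · exact fun h => ⟨i, h, rfl⟩

lemma seg_zero (x : ℕ → ℕ) : seg x 0 = ∅ := by simp [seg]

lemma seg_nonempty {x : ℕ → ℕ} {m : ℕ} (hm : 1 ≤ m) : (seg x m).Nonempty :=
  ⟨x 0, mem_seg.mpr ⟨0, hm, rfl⟩⟩

lemma seg_initseg {x : ℕ → ℕ} (hx : StrictMono x) {t m : ℕ} (htm : t ≤ m) :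
    FinsetInitSeg (seg x t) (seg x m) := by
  constructor
  · exact Finset.image_subset_image (Finset.range_subset_range.mpr htm)
  · intro n hn hn' a ha
    obtain ⟨i, him, rfl⟩ := mem_seg.mp hn
    obtain ⟨i', hit, rfl⟩ := mem_seg.mp ha
    have hit' : t ≤ i := by
      by_contra hlt
      exact hn' (mem_seg.mpr ⟨i, by omega, rfl⟩)
    exact hx (by omega)

lemma initseg_of_seg {x : ℕ → ℕ} (hx : StrictMono x) {m : ℕ} {H : Finset ℕ}
    (hH : FinsetInitSeg H (seg x m)) : ∃ t ≤ m, H = seg x t := by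
  induction m with
  | zero =>
    refine ⟨0, le_refl 0, ?_⟩
    have := hH.1
    rw [seg_zero] at this
    rw [Finset.subset_empty.mp this, seg_zero]
  | succ m IH =>
    by_cases hxm : x m ∈ H
    · refine ⟨m + 1, le_refl _, ?_⟩
      refine Finset.Subset.antisymm hH.1 ?_
      intro a ha
      by_contra haH
      have := hH.2 a ha haH (x m) hxm
      obtain ⟨i, hi, rfl⟩ := mem_seg.mp ha
      have : x i ≤ x m := hx.monotone (by omega)
      omega
    · have hHm : FinsetInitSeg H (seg x m) := by
        constructor
        · intro a ha
          obtain ⟨i, hi, rfl⟩ := mem_seg.mp (hH.1 ha)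
          have : i ≠ m := fun he => hxm (he ▸ ha)
          exact mem_seg.mpr ⟨i, by omega, rfl⟩
        · intro n hn hn' a ha
          exact hH.2 n ((seg_initseg hx (Nat.le_succ m)).1 hn) hn' a ha
      obtain ⟨t, htm, he⟩ := IH hHm
      exact ⟨t, by omega, he⟩

lemma seg_shift {x : ℕ → ℕ} (hx : StrictMono x) (t s : ℕ) :
    seg (fun i => x (i + t)) s = seg x (s + t) \ seg x t := by
  ext a
  simp only [mem_seg, Finset.mem_sdiff]
  constructor
  · rintro ⟨i, hi, rfl⟩
    refine ⟨⟨i + t, by omega, rfl⟩, ?_⟩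
    rintro ⟨i', hi', he⟩
    have := hx.injective he
    omega
  · rintro ⟨⟨i, hi, rfl⟩, hnot⟩
    have hit : t ≤ i := by
      by_contra hlt
      exact hnot ⟨i, by omega, rfl⟩
    exact ⟨i - t, by omega, by rw [Nat.sub_add_cancel hit]⟩

/-- `F` is a union of at most `j` consecutive blocks from `T`. -/
def NBlocks (T : Set (Finset ℕ)) (j : ℕ) (F : Finset ℕ) : Prop :=
  ∃ Fs : Fin j → Finset ℕ, (∀ i, Fs i ∈ T) ∧
    (∀ i i' : Fin j, i < i' → ∀ a ∈ Fs i, ∀ b ∈ Fs i', a < b) ∧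
    F = Finset.univ.biUnion Fs

lemma nblocks_mono {T : Set (Finset ℕ)} (hemp : ∅ ∈ T) {j j' : ℕ} (hjj : j ≤ j')
    {F : Finset ℕ} (hF : NBlocks T j F) : NBlocks T j' F := by
  obtain ⟨Fs, h1, h2, h3⟩ := hF
  refine ⟨fun i => if h : (i : ℕ) < j then Fs ⟨i, h⟩ else ∅, fun i => ?_, ?_, ?_⟩
  · by_cases h : (i : ℕ) < j
    · simpa [h] using h1 ⟨i, h⟩
    · simpa [h] using hemp
  · intro i i' hii a ha b hb
    by_cases h' : (i' : ℕ) < j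
    · have h : (i : ℕ) < j := lt_trans hii h'
      simp only [dif_pos h] at ha
      simp only [dif_pos h'] at hb
      exact h2 ⟨i, h⟩ ⟨i', h'⟩ hii a ha b hb
    · simp only [dif_neg h'] at hb
      exact absurd hb (Finset.notMem_empty b)
  · subst h3
    ext a
    simp only [Finset.mem_biUnion, Finset.mem_univ, true_and]
    constructor
    · rintro ⟨i, hi⟩
      exact ⟨⟨i, lt_of_lt_of_le i.2 hjj⟩, by simpa only [dif_pos i.2] using hi⟩
    · rintro ⟨i, hi⟩
      by_cases h : (i : ℕ) < j
      · simp only [dif_pos h] at hi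
        exact ⟨⟨i, h⟩, hi⟩
      · simp only [dif_neg h] at hi
        exact absurd hi (Finset.notMem_empty a)

lemma nblocks_hered {T : Set (Finset ℕ)}
    (hher : ∀ F ∈ T, ∀ G, FinsetInitSeg G F → G ∈ T) {j : ℕ} {F H : Finset ℕ}
    (hF : NBlocks T j F) (hH : FinsetInitSeg H F) : NBlocks T j H := by
  obtain ⟨Fs, h1, h2, rfl⟩ := hF
  refine ⟨fun i => Fs i ∩ H, fun i => ?_, ?_, ?_⟩
  · refine hher (Fs i) (h1 i) _ (initseg_inter hH ?_)
    exact fun a ha => Finset.mem_biUnion.mpr ⟨i, Finset.mem_univ i, ha⟩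
  · intro i i' hii a ha b hb
    exact h2 i i' hii a (Finset.mem_inter.mp ha).1 b (Finset.mem_inter.mp hb).1
  · ext a
    simp only [Finset.mem_biUnion, Finset.mem_univ, true_and, Finset.mem_inter]
    constructor
    · intro haH
      obtain ⟨i, _, hi⟩ := Finset.mem_biUnion.mp (hH.1 haH)
      exact ⟨i, hi, haH⟩
    · rintro ⟨i, _, haH⟩
      exact haH

lemma nblocks_peel {T : Set (Finset ℕ)} {j : ℕ} {F : Finset ℕ}
    (hF : NBlocks T (j + 1) F) (hne : F.Nonempty) :
    ∃ B, B ∈ T ∧ B.Nonempty ∧ FinsetInitSeg B F ∧ NBlocks T j (F \ B) := by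
  obtain ⟨Fs, h1, h2, rfl⟩ := hF
  have hex : (Finset.univ.filter (fun i : Fin (j+1) => (Fs i).Nonempty)).Nonempty := by
    obtain ⟨a, ha⟩ := hne
    obtain ⟨i, _, hi⟩ := Finset.mem_biUnion.mp ha
    exact ⟨i, Finset.mem_filter.mpr ⟨Finset.mem_univ i, ⟨a, hi⟩⟩⟩
  set i₀ := (Finset.univ.filter (fun i : Fin (j+1) => (Fs i).Nonempty)).min' hex with hi₀
  have hi₀ne : (Fs i₀).Nonempty :=
    (Finset.mem_filter.mp ((Finset.univ.filter _).min'_mem hex)).2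
  have hmin : ∀ i : Fin (j+1), i < i₀ → Fs i = ∅ := by
    intro i hi
    by_contra hne'
    have : i₀ ≤ i := Finset.min'_le _ i (Finset.mem_filter.mpr
      ⟨Finset.mem_univ i, Finset.nonempty_iff_ne_empty.mpr hne'⟩)
    exact absurd hi (not_lt.mpr this)
  have hBF : Fs i₀ ⊆ Finset.univ.biUnion Fs :=
    fun a ha => Finset.mem_biUnion.mpr ⟨i₀, Finset.mem_univ i₀, ha⟩
  have hinit : FinsetInitSeg (Fs i₀) (Finset.univ.biUnion Fs) := by
    refine ⟨hBF, fun n hn hn' m hm => ?_⟩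
    obtain ⟨i', _, hi'⟩ := Finset.mem_biUnion.mp hn
    rcases lt_trichotomy i' i₀ with h | h | h
    · rw [hmin i' h] at hi'
      exact absurd hi' (Finset.notMem_empty n)
    · exact absurd (h ▸ hi') hn'
    · exact h2 i₀ i' h m hm n hi'
  refine ⟨Fs i₀, h1 i₀, hi₀ne, hinit, fun i => Fs (i₀.succAbove i), fun i => h1 _, ?_, ?_⟩
  · intro i i' hii a ha b hb
    exact h2 _ _ (Fin.strictMono_succAbove i₀ hii) a ha b hb
  · ext a
    simp only [Finset.mem_sdiff, Finset.mem_biUnion, Finset.mem_univ, true_and]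
    constructor
    · rintro ⟨⟨i', hi'⟩, haB⟩
      have hne' : i' ≠ i₀ := by
        rintro rfl
        exact haB hi'
      obtain ⟨i, hi⟩ := Fin.exists_succAbove_eq hne'
      exact ⟨i, hi ▸ hi'⟩
    · rintro ⟨i, hi⟩
      have hne' : i₀.succAbove i ≠ i₀ := Fin.succAbove_ne i₀ i
      refine ⟨⟨_, hi⟩, fun haB => ?_⟩
      rcases lt_trichotomy (i₀.succAbove i) i₀ with h | h | h
      · rw [hmin _ h] at hi
        exact absurd hi (Finset.notMem_empty a)
      · exact hne' h
      · exact lt_irrefl a (h2 i₀ _ h a haB a hi)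


end NB

namespace NB

lemma aux_no_nblocks {T : Set (Finset ℕ)} (hemp : ∅ ∈ T)
    (hher : ∀ F ∈ T, ∀ G, FinsetInitSeg G F → G ∈ T)
    (hnb : ¬ ∃ x : ℕ → ℕ, StrictMono x ∧ ∀ m, seg x m ∈ T) :
    ∀ j : ℕ, ¬ ∃ x : ℕ → ℕ, StrictMono x ∧ ∀ m, NBlocks T j (seg x m) := by
  intro j
  induction j with
  | zero =>
    rintro ⟨x, hx, hall⟩
    obtain ⟨Fs, _, _, h3⟩ := hall 1
    have hx0 : x 0 ∈ seg x 1 := mem_seg.mpr ⟨0, one_pos, rfl⟩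
    rw [h3] at hx0
    simp at hx0
  | succ j IH =>
    rintro ⟨x, hx, hall⟩
    have key : ∀ m, 1 ≤ m →
        ∃ t, 1 ≤ t ∧ t ≤ m ∧ seg x t ∈ T ∧ NBlocks T j (seg x m \ seg x t) := by
      intro m hm
      obtain ⟨B, hBT, hBne, hBinit, hBrest⟩ := nblocks_peel (hall m) (seg_nonempty hm)
      obtain ⟨t, htm, rfl⟩ := initseg_of_seg hx hBinit
      have ht1 : 1 ≤ t := by
        rcases Nat.eq_zero_or_pos t with rfl | hp
        · rw [seg_zero] at hBne
          exact absurd rfl (Finset.nonempty_iff_ne_empty.mp hBne)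
        · exact hp
      exact ⟨t, ht1, htm, hBT, hBrest⟩
    by_cases hc : ∀ s, seg x s ∈ T
    · exact hnb ⟨x, hx, hc⟩
    · push_neg at hc
      obtain ⟨s₀, hs₀⟩ := hc
      set tm := fun m => if hm : 1 ≤ m then (key m hm).choose else 0 with htmdef
      have htm : ∀ m, 1 ≤ m → 1 ≤ tm m ∧ tm m ≤ m ∧ seg x (tm m) ∈ T ∧
          NBlocks T j (seg x m \ seg x (tm m)) := by
        intro m hm
        simp only [htmdef, dif_pos hm]
        exact (key m hm).choose_spec
      have hb : ∀ m, 1 ≤ m → tm m ≤ s₀ := by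
        intro m hm
        by_contra hlt
        exact hs₀ (hher _ (htm m hm).2.2.1 _ (seg_initseg hx (by omega)))
      set f : ℕ → Fin (s₀ + 1) := fun n => ⟨tm (n + 1), by
        have := hb (n + 1) (by omega); omega⟩ with hfdef
      obtain ⟨y, hy⟩ := Finite.exists_infinite_fiber f
      have hyInf : (f ⁻¹' {y}).Infinite := Set.infinite_coe_iff.mp hy
      set t := (y : ℕ) with htdef
      have hfib : ∀ n ∈ f ⁻¹' {y}, tm (n + 1) = t := by
        intro n hn
        have : f n = y := hn
        rw [hfdef] at this
        exact congrArg Fin.val this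
      have ht1 : 1 ≤ t := by
        obtain ⟨n₀, hn₀⟩ := hyInf.nonempty
        rw [← hfib n₀ hn₀]
        exact (htm (n₀ + 1) (by omega)).1
      set x' := fun i => x (i + t) with hx'def
      have hx' : StrictMono x' := fun a b hab => hx (by omega)
      have hcof : ∀ s, ∃ s' ≥ s, NBlocks T j (seg x' s') := by
        intro s
        obtain ⟨n, hn, hgt⟩ := hyInf.exists_gt (s + t)
        have htn : t ≤ n + 1 := by
          rw [← hfib n hn]
          exact (htm (n + 1) (by omega)).2.1
        refine ⟨n + 1 - t, by omega, ?_⟩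
        rw [hx'def, seg_shift hx t (n + 1 - t), Nat.sub_add_cancel htn]
        have := (htm (n + 1) (by omega)).2.2.2
        rwa [hfib n hn] at this
      refine IH ⟨x', hx', fun s => ?_⟩
      obtain ⟨s', hs', hNB⟩ := hcof s
      exact nblocks_hered hher hNB (seg_initseg hx' hs')

lemma no_branch {S : Ordinal → Set (Finset ℕ)} {A : Ordinal → ℕ → Ordinal}
    (h : SchreierSystem S A) :
    ∀ α : Ordinal, α < omega1 →
      ¬ ∃ x : ℕ → ℕ, StrictMono x ∧ ∀ m, seg x m ∈ S α := by
  intro α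
  induction α using Ordinal.induction with
  | h α IH =>
    rintro hα ⟨x, hx, hall⟩
    rcases Ordinal.zero_or_succ_or_isSuccLimit α with h0 | ⟨β, hβ⟩ | hlim
    · subst h0
      have h2 := hall 2
      rw [h.1] at h2
      have hcard : (seg x 2).card = 2 := by
        rw [seg, Finset.card_image_of_injective _ hx.injective, Finset.card_range]
      rcases h2 with ⟨n, _, he⟩ | he
      · rw [he] at hcard
        simp at hcard
      · simp only [Set.mem_singleton_iff] at he
        rw [he] at hcard
        simp at hcard
    · have hβ' : α = β + 1 := by rw [← hβ, Ordinal.add_one_eq_succ]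
      subst hβ'
      have hβlt : β < β + 1 := by rw [Ordinal.add_one_eq_succ]; exact Order.lt_succ β
      have hβω : β < omega1 := hβlt.trans hα
      obtain ⟨hemp, hher⟩ := hered h β hβω
      refine aux_no_nblocks hemp hher (IH β hβlt hβω) (x 0 + 1) ⟨x, hx, fun m => ?_⟩
      rcases Nat.eq_zero_or_pos m with rfl | hm
      · rw [seg_zero]
        refine nblocks_mono hemp (Nat.zero_le _) ⟨Fin.elim0, fun i => i.elim0, fun i => i.elim0, ?_⟩
        simp
      · have hm' := hall m
        rw [h.2.2.1 β hα] at hm'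
        obtain ⟨k, Fs, h1, h2, h3, h4⟩ := hm'
        have hk : k ≤ x 0 := by
          have hx0 : x 0 ∈ seg x m := mem_seg.mpr ⟨0, hm, rfl⟩
          rw [h4] at hx0
          obtain ⟨i, _, hi⟩ := Finset.mem_biUnion.mp hx0
          exact h3 i _ hi
        exact nblocks_mono hemp (by omega) ⟨Fs, h1, h2, h4⟩
    · obtain ⟨hmono, hlt, hcof, hSeq⟩ := h.2.2.2 α hα hlim
      have key : ∀ m, 1 ≤ m → ∃ n, n ≤ x 0 ∧ seg x m ∈ S (A α n) := by
        intro m hm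
        have hm' := hall m
        rw [hSeq] at hm'
        obtain ⟨n, hn, hminel⟩ := hm'
        exact ⟨n, hminel _ (mem_seg.mpr ⟨0, hm, rfl⟩), hn⟩
      set nm := fun m => if hm : 1 ≤ m then (key m hm).choose else 0 with hnmdef
      have hnm : ∀ m, 1 ≤ m → nm m ≤ x 0 ∧ seg x m ∈ S (A α (nm m)) := by
        intro m hm
        simp only [hnmdef, dif_pos hm]
        exact (key m hm).choose_spec
      set f : ℕ → Fin (x 0 + 1) := fun n => ⟨nm (n + 1), by
        have := (hnm (n + 1) (by omega)).1; omega⟩ with hfdef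
      obtain ⟨y, hy⟩ := Finite.exists_infinite_fiber f
      have hyInf : (f ⁻¹' {y}).Infinite := Set.infinite_coe_iff.mp hy
      have hfib : ∀ n ∈ f ⁻¹' {y}, nm (n + 1) = (y : ℕ) := by
        intro n hn
        have : f n = y := hn
        rw [hfdef] at this
        exact congrArg Fin.val this
      have hAy : A α (y : ℕ) < omega1 := (hlt _).trans hα
      obtain ⟨_, hherA⟩ := hered h (A α (y : ℕ)) hAy
      refine IH (A α (y : ℕ)) (hlt _) hAy ⟨x, hx, fun s => ?_⟩
      obtain ⟨n, hn, hgt⟩ := hyInf.exists_gt s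
      have hseg : seg x (n + 1) ∈ S (A α (y : ℕ)) := by
        have := (hnm (n + 1) (by omega)).2
        rwa [hfib n hn] at this
      exact hherA _ hseg _ (seg_initseg hx (by omega))

end NB

namespace NB


variable (Sa : Set (Finset ℕ))

/-- the canonical embedding of `Sa` into `{0,1}^ℕ`. -/
def emb : {F : Finset ℕ // F ∈ Sa} → (ℕ → Bool) := fun F => fun n => decide (n ∈ F.1)

lemma emb_inducing : Topology.IsInducing (emb Sa) := ⟨rfl⟩

lemma emb_injective : Function.Injective (emb Sa) := by
  intro F G hFG
  ext1
  ext n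
  have := congrFun hFG n
  simpa [emb] using this

lemma emb_range_closed (hemp : ∅ ∈ Sa)
    (hher : ∀ F ∈ Sa, ∀ G, FinsetInitSeg G F → G ∈ Sa)
    (hnb : ¬ ∃ x : ℕ → ℕ, StrictMono x ∧ ∀ m, seg x m ∈ Sa) :
    IsClosed (Set.range (emb Sa)) := by
  refine isClosed_of_closure_subset ?_
  intro f hf
  -- approximation by members of `Sa`
  have happrox : ∀ M : ℕ, ∃ F ∈ Sa, ∀ m < M, decide (m ∈ F) = f m := by
    intro M
    have hO : IsOpen {h : ℕ → Bool | ∀ m ∈ Finset.range M, h m = f m} := by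
      have : {h : ℕ → Bool | ∀ m ∈ Finset.range M, h m = f m} =
          Set.pi (↑(Finset.range M) : Set ℕ) (fun m => {f m}) := by
        ext h
        simp [Set.mem_pi]
      rw [this]
      exact isOpen_set_pi (Finset.range M).finite_toSet (fun i _ => isOpen_discrete _)
    have hfO : f ∈ {h : ℕ → Bool | ∀ m ∈ Finset.range M, h m = f m} := fun m _ => rfl
    obtain ⟨g', hg1, hg2⟩ := mem_closure_iff.mp hf _ hO hfO
    obtain ⟨F, rfl⟩ := hg2
    exact ⟨F.1, F.2, fun m hm => hg1 m (Finset.mem_range.mpr hm)⟩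
  -- the truncated supports are all in `Sa`
  have hD : ∀ M : ℕ, (Finset.range M).filter (fun m => f m = true) ∈ Sa := by
    intro M
    obtain ⟨F, hFSa, hFf⟩ := happrox M
    have hDF : (Finset.range M).filter (fun m => f m = true) = F ∩ Finset.range M := by
      ext m
      simp only [Finset.mem_filter, Finset.mem_inter, Finset.mem_range]
      constructor
      · rintro ⟨hm, hfm⟩
        have := hFf m hm
        rw [hfm] at this
        exact ⟨of_decide_eq_true this, hm⟩
      · rintro ⟨hmF, hm⟩
        refine ⟨hm, ?_⟩
        rw [← hFf m hm]
        exact decide_eq_true hmF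
    rw [hDF]
    exact hher F hFSa _ (initseg_inter_range F M)
  by_cases hfin : {n : ℕ | f n = true}.Finite
  · -- finite support: `f` is in the range
    obtain ⟨M₀, hM₀⟩ := hfin.bddAbove
    refine ⟨⟨(Finset.range (M₀ + 1)).filter (fun m => f m = true), hD (M₀ + 1)⟩, ?_⟩
    funext n
    simp only [emb, Finset.mem_filter, Finset.mem_range]
    by_cases hfn : f n = true
    · have hn : n ≤ M₀ := hM₀ hfn
      rw [hfn]
      exact decide_eq_true ⟨by omega, rfl⟩
    · have : ¬(n < M₀ + 1 ∧ f n = true) := fun hc => hfn hc.2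
      rw [decide_eq_false this]
      exact (Bool.not_eq_true (f n)).mp hfn |>.symm
  · -- infinite support: would give an infinite branch
    exfalso
    set p : ℕ → Prop := fun n => f n = true with hp
    have hpinf : {n | p n}.Infinite := hfin
    set x := Nat.nth p with hx
    have hmono : StrictMono x := Nat.nth_strictMono hpinf
    refine hnb ⟨x, hmono, fun m => ?_⟩
    rcases Nat.eq_zero_or_pos m with rfl | hm
    · rw [seg_zero]; exact hemp
    · obtain ⟨t, rfl⟩ : ∃ t, m = t + 1 := ⟨m - 1, by omega⟩
      have hseg : seg x (t + 1) = (Finset.range (x t + 1)).filter (fun m => f m = true) := by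
        ext a
        simp only [mem_seg, Finset.mem_filter, Finset.mem_range]
        constructor
        · rintro ⟨i, hi, rfl⟩
          exact ⟨by have := hmono.monotone (Nat.lt_succ_iff.mp hi); omega,
            Nat.nth_mem_of_infinite hpinf i⟩
        · rintro ⟨ha, hpa⟩
          have hpa' : p a := hpa
          refine ⟨Nat.count p a, ?_, Nat.nth_count hpa'⟩
          by_contra hcnt
          have hlt : x t < x (Nat.count p a) := hmono (by omega)
          rw [hx, Nat.nth_count hpa'] at hlt
          rw [hx] at ha
          omega
      rw [hseg]
      exact hD (x t + 1)

lemma compact_of_closed (hcl : IsClosed (Set.range (emb Sa))) :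
    IsCompact (Set.univ : Set {F : Finset ℕ // F ∈ Sa}) := by
  rw [(emb_inducing Sa).isCompact_iff]
  rw [Set.image_univ]
  exact hcl.isCompact

lemma oscillation (hcs : IsCompact (Set.univ : Set {F : Finset ℕ // F ∈ Sa}))
    (g : BoundedContinuousFunction {F : Finset ℕ // F ∈ Sa} ℝ) {ε : ℝ} (hε : 0 < ε) :
    ∃ M : ℕ, ∀ F G : {F : Finset ℕ // F ∈ Sa},
      (∀ m ≤ M, (m ∈ F.1 ↔ m ∈ G.1)) → |g F - g G| ≤ ε := by
  -- for every point, a finite set of coordinates controlling `g` up to `ε/2`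
  have hkey : ∀ F : {F : Finset ℕ // F ∈ Sa}, ∃ s : Finset ℕ,
      ∀ y : {F : Finset ℕ // F ∈ Sa},
        (∀ i ∈ s, emb Sa y i = emb Sa F i) → |g y - g F| < ε / 2 := by
    intro F
    have hW : {y : {F : Finset ℕ // F ∈ Sa} | |g y - g F| < ε / 2} ∈ nhds F := by
      have : Metric.ball (g F) (ε / 2) ∈ nhds (g F) := Metric.ball_mem_nhds _ (by positivity)
      have h2 := g.continuous.continuousAt.preimage_mem_nhds this
      refine Filter.mem_of_superset h2 ?_
      intro y hy
      simpa [Real.dist_eq] using hy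
    rw [(emb_inducing Sa).nhds_eq_comap, Filter.mem_comap] at hW
    obtain ⟨U, hU, hUsub⟩ := hW
    rw [nhds_pi] at hU
    rw [Filter.mem_pi'] at hU
    obtain ⟨I, t, hti, hIt⟩ := hU
    refine ⟨I, fun y hy => ?_⟩
    refine hUsub ?_
    refine hIt ?_
    intro i hi
    rw [hy i hi]
    have := hti i
    rw [nhds_discrete Bool] at this
    exact this
  set s := fun F => (hkey F).choose with hsdef
  have hs : ∀ F, ∀ y, (∀ i ∈ s F, emb Sa y i = emb Sa F i) → |g y - g F| < ε / 2 :=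
    fun F => (hkey F).choose_spec
  set U : {F : Finset ℕ // F ∈ Sa} → Set {F : Finset ℕ // F ∈ Sa} :=
    fun F => {y | ∀ i ∈ s F, emb Sa y i = emb Sa F i} with hUdef
  have hUopen : ∀ F, IsOpen (U F) := by
    intro F
    have : U F = emb Sa ⁻¹' (Set.pi (↑(s F) : Set ℕ) (fun i => {emb Sa F i})) := by
      ext y
      simp [hUdef, Set.mem_pi]
    rw [this]
    exact (isOpen_set_pi (s F).finite_toSet (fun i _ => isOpen_discrete _)).preimage
      continuous_induced_dom
  have hcover : (Set.univ : Set {F : Finset ℕ // F ∈ Sa}) ⊆ ⋃ F, U F := by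
    intro F _
    exact Set.mem_iUnion.mpr ⟨F, fun i _ => rfl⟩
  obtain ⟨r, hr⟩ := hcs.elim_finite_subcover U hUopen hcover
  refine ⟨r.sup (fun F => (s F).sup id), fun F G hFG => ?_⟩
  obtain ⟨F₀, hF₀r, hFU⟩ := Set.mem_iUnion₂.mp (hr (Set.mem_univ F))
  have hGU : G ∈ U F₀ := by
    intro i hi
    have hiM : i ≤ r.sup (fun F => (s F).sup id) :=
      le_trans (Finset.le_sup (f := id) hi) (Finset.le_sup (f := fun F => (s F).sup id) hF₀r)
    have : emb Sa G i = emb Sa F i := by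
      simp only [emb]
      exact decide_eq_decide.mpr (hFG i hiM).symm
    rw [this]
    exact hFU i hi
  have h1 := hs F₀ F hFU
  have h2 := hs F₀ G hGU
  have htri : |g F - g G| ≤ |g F - g F₀| + |g G - g F₀| := by
    have h3 := abs_sub_le (g F) (g F₀) (g G)
    rwa [abs_sub_comm (g F₀) (g G)] at h3
  calc |g F - g G| ≤ |g F - g F₀| + |g G - g F₀| := htri
    _ ≤ ε / 2 + ε / 2 := add_le_add h1.le h2.le
    _ = ε := by ring


end NB

/-- For any admissible enumeration `(χ_{F_i})` of the node functions
`B = {χ_F : F ∈ S_α}`, the sequence `(χ_{F_i})` is a monotone Schauder basis of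
`C(ω^{ω^α}) = C(S_α)`. -/
theorem node_basis_monotone_basis
    (S : Ordinal → Set (Finset ℕ)) (A : Ordinal → ℕ → Ordinal)
    (h : SchreierSystem S A) (α : Ordinal) (hα : α < omega1)
    (χ : Finset ℕ → BoundedContinuousFunction {F : Finset ℕ // F ∈ S α} ℝ)
    (hχ : ∀ (F : Finset ℕ) (G : {F : Finset ℕ // F ∈ S α}),
      χ F G = if FinsetInitSeg F G.1 then 1 else 0)
    (E : ℕ → Finset ℕ)
    (hE1 : ∀ i, E i ∈ S α) (hE2 : Function.Injective E)
    (hE3 : ∀ G ∈ S α, ∃ i, E i = G)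
    (hadm : ∀ i j, FinsetInitSeg (E i) (E j) → E i ≠ E j → i < j) :
    (∀ (a : ℕ → ℝ) (n : ℕ),
        ‖∑ i ∈ Finset.range n, a i • χ (E i)‖ ≤
          ‖∑ i ∈ Finset.range (n + 1), a i • χ (E i)‖) ∧
    (∀ g : BoundedContinuousFunction {F : Finset ℕ // F ∈ S α} ℝ,
        ∃! a : ℕ → ℝ,
          Filter.Tendsto (fun n => ∑ i ∈ Finset.range n, a i • χ (E i))
            Filter.atTop (nhds g)) := by
  obtain ⟨hemp, hher⟩ := NB.hered h α hα
  have hnb := NB.no_branch h α hα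
  have hcs : IsCompact (Set.univ : Set {F : Finset ℕ // F ∈ S α}) :=
    NB.compact_of_closed _ (NB.emb_range_closed _ hemp hher hnb)
  have hE0 : E 0 = ∅ := by
    obtain ⟨i, hi⟩ := hE3 ∅ hemp
    rcases Nat.eq_zero_or_pos i with rfl | hp
    · exact hi
    · exfalso
      have hne : E i ≠ E 0 := fun he => (by omega : i ≠ 0) (hE2 he)
      have hinit : FinsetInitSeg (E i) (E 0) := by
        rw [hi]; exact NB.initseg_empty _
      have := hadm i 0 hinit hne
      omega
  -- evaluation of partial sums
  have heval : ∀ (c : ℕ → ℝ) (n : ℕ) (G : {F : Finset ℕ // F ∈ S α}),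
      (∑ i ∈ Finset.range n, c i • χ (E i)) G
        = ∑ i ∈ (Finset.range n).filter (fun i => FinsetInitSeg (E i) G.1), c i := by
    intro c n G
    rw [Finset.sum_filter]
    simp only [BoundedContinuousFunction.coe_sum, Finset.sum_apply,
      BoundedContinuousFunction.coe_smul, smul_eq_mul, hχ, mul_ite, mul_one, mul_zero]
  constructor
  · -- monotonicity of the partial sums
    intro a n
    rcases Nat.eq_zero_or_pos n with rfl | hn
    · simp
    · have hnorm : ∀ G, |(∑ i ∈ Finset.range n, a i • χ (E i)) G| ≤
          ‖∑ i ∈ Finset.range (n + 1), a i • χ (E i)‖ := by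
        intro G
        by_cases hEn : FinsetInitSeg (E n) G.1
        · have hEnne : (E n).Nonempty := by
            rw [Finset.nonempty_iff_ne_empty]
            intro he
            have : n = 0 := hE2 (he.trans hE0.symm)
            omega
          set G' : {F : Finset ℕ // F ∈ S α} :=
            ⟨(E n).erase ((E n).max' hEnne),
              hher _ (hE1 n) _ (NB.erase_max_initseg hEnne)⟩ with hG'def
          have hsame : ∀ i < n, (FinsetInitSeg (E i) G'.1 ↔ FinsetInitSeg (E i) G.1) := by
            intro i hi
            constructor
            · intro h1
              exact NB.initseg_trans (NB.initseg_trans h1 (NB.erase_max_initseg hEnne)) hEn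
            · intro h1
              rcases NB.initseg_comp h1 hEn with h2 | h2
              · have hne : E i ≠ E n := fun he => (by omega : i ≠ n) (hE2 he)
                exact NB.initseg_erase_max h2 hne hEnne
              · exfalso
                have hne : E n ≠ E i := fun he => (by omega : n ≠ i) (hE2 he)
                have := hadm n i h2 hne
                omega
          have hEnG' : ¬ FinsetInitSeg (E n) G'.1 := by
            intro h1
            have hmax : (E n).max' hEnne ∈ (E n).erase ((E n).max' hEnne) :=
              h1.1 (Finset.max'_mem _ _)
            exact (Finset.mem_erase.mp hmax).1 rfl
          have hval : (∑ i ∈ Finset.range n, a i • χ (E i)) G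
              = (∑ i ∈ Finset.range (n + 1), a i • χ (E i)) G' := by
            rw [heval, heval]
            apply Finset.sum_congr _ (fun _ _ => rfl)
            ext i
            simp only [Finset.mem_filter, Finset.mem_range]
            constructor
            · rintro ⟨hi, hinit⟩
              exact ⟨by omega, (hsame i hi).mpr hinit⟩
            · rintro ⟨hi, hinit⟩
              have hine : i ≠ n := fun he => hEnG' (he ▸ hinit)
              exact ⟨by omega, (hsame i (by omega)).mp hinit⟩
          rw [hval]
          simpa [Real.norm_eq_abs] using BoundedContinuousFunction.norm_coe_le_norm
            (∑ i ∈ Finset.range (n + 1), a i • χ (E i)) G'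
        · have hval : (∑ i ∈ Finset.range n, a i • χ (E i)) G
              = (∑ i ∈ Finset.range (n + 1), a i • χ (E i)) G := by
            rw [heval, heval]
            apply Finset.sum_congr _ (fun _ _ => rfl)
            ext i
            simp only [Finset.mem_filter, Finset.mem_range]
            constructor
            · rintro ⟨hi, hinit⟩
              exact ⟨by omega, hinit⟩
            · rintro ⟨hi, hinit⟩
              have hine : i ≠ n := fun he => hEn (he ▸ hinit)
              exact ⟨by omega, hinit⟩
          rw [hval]
          simpa [Real.norm_eq_abs] using BoundedContinuousFunction.norm_coe_le_norm
            (∑ i ∈ Finset.range (n + 1), a i • χ (E i)) G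
      refine (BoundedContinuousFunction.norm_le (norm_nonneg _)).mpr (fun G => ?_)
      rw [Real.norm_eq_abs]
      exact hnorm G
  · -- existence and uniqueness of the expansion
    intro g
    -- the coefficients
    set a : ℕ → ℝ := fun i =>
      if hne : (E i).Nonempty then
        g ⟨E i, hE1 i⟩ -
          g ⟨(E i).erase ((E i).max' hne), hher _ (hE1 i) _ (NB.erase_max_initseg hne)⟩
      else g ⟨E i, hE1 i⟩ with hadef
    -- the chain-sum identity
    have hJ : ∀ (c : ℕ) (F : Finset ℕ) (hF : F ∈ S α), F.card = c →
        ∀ n : ℕ, (∀ i, FinsetInitSeg (E i) F → i < n) →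
        (∑ i ∈ (Finset.range n).filter (fun i => FinsetInitSeg (E i) F), a i) = g ⟨F, hF⟩ := by
      intro c
      induction c using Nat.strong_induction_on with
      | _ c IH =>
        intro F hF hcard n hn
        rcases Finset.eq_empty_or_nonempty F with rfl | hne
        · have hfil : (Finset.range n).filter (fun i => FinsetInitSeg (E i) ∅) = {0} := by
            ext i
            simp only [Finset.mem_filter, Finset.mem_range, Finset.mem_singleton]
            constructor
            · rintro ⟨hi, hinit⟩
              have h1 : E i = ∅ := Finset.subset_empty.mp hinit.1
              exact hE2 (h1.trans hE0.symm)
            · rintro rfl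
              have h1 : FinsetInitSeg (E 0) ∅ := by rw [hE0]; exact NB.initseg_empty ∅
              exact ⟨hn 0 h1, h1⟩
          rw [hfil, Finset.sum_singleton]
          have hEne : ¬ (E 0).Nonempty := by rw [hE0]; simp
          rw [hadef]
          simp only [dif_neg hEne]
          exact congrArg g (Subtype.ext hE0)
        · obtain ⟨j, hj⟩ := hE3 F hF
          subst hj
          have hjn : j < n := hn j (NB.initseg_refl _)
          have hsplit : (Finset.range n).filter (fun i => FinsetInitSeg (E i) (E j))
              = insert j ((Finset.range n).filter
                  (fun i => FinsetInitSeg (E i) ((E j).erase ((E j).max' hne)))) := by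
            ext i
            simp only [Finset.mem_insert, Finset.mem_filter, Finset.mem_range]
            constructor
            · rintro ⟨hi, hinit⟩
              by_cases hij : E i = E j
              · exact Or.inl (hE2 hij)
              · exact Or.inr ⟨hi, NB.initseg_erase_max hinit hij hne⟩
            · rintro (rfl | ⟨hi, hinit⟩)
              · exact ⟨hjn, NB.initseg_refl _⟩
              · exact ⟨hi, NB.initseg_trans hinit (NB.erase_max_initseg hne)⟩
          have hjnotin : j ∉ (Finset.range n).filter
              (fun i => FinsetInitSeg (E i) ((E j).erase ((E j).max' hne))) := by
            intro hmem
            have h1 := (Finset.mem_filter.mp hmem).2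
            have hmax : (E j).max' hne ∈ (E j).erase ((E j).max' hne) :=
              h1.1 (Finset.max'_mem _ _)
            exact (Finset.mem_erase.mp hmax).1 rfl
          rw [hsplit, Finset.sum_insert hjnotin]
          have hF' : (E j).erase ((E j).max' hne) ∈ S α :=
            hher _ (hE1 j) _ (NB.erase_max_initseg hne)
          have hc1 : 1 ≤ c := by
            rw [← hcard]
            exact Finset.card_pos.mpr hne
          have hIH := IH (c - 1) (by omega) ((E j).erase ((E j).max' hne)) hF'
            (by rw [Finset.card_erase_of_mem (Finset.max'_mem _ _), hcard])
            n (fun i hi => hn i (NB.initseg_trans hi (NB.erase_max_initseg hne)))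
          rw [hIH, hadef]
          simp only [dif_pos hne]
          ring_nf
    -- the partial sums evaluate to `g` at maximal captured initial segments
    have hPn : ∀ n, 1 ≤ n → ∀ G : {F : Finset ℕ // F ∈ S α},
        ∃ H : Finset ℕ, ∃ hH : H ∈ S α, FinsetInitSeg H G.1 ∧
          (∀ D, FinsetInitSeg D G.1 → (∃ i, E i = D ∧ i < n) → FinsetInitSeg D H) ∧
          (∑ i ∈ Finset.range n, a i • χ (E i)) G = g ⟨H, hH⟩ := by
      intro n hn G
      set I := (Finset.range n).filter (fun i => FinsetInitSeg (E i) G.1) with hIdef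
      have hIne : I.Nonempty := by
        refine ⟨0, Finset.mem_filter.mpr ⟨Finset.mem_range.mpr (by omega), ?_⟩⟩
        rw [hE0]
        exact NB.initseg_empty _
      set j := I.max' hIne with hjdef
      have hjI : j ∈ I := I.max'_mem hIne
      have hjG : FinsetInitSeg (E j) G.1 := (Finset.mem_filter.mp hjI).2
      have hmem : ∀ i, i ∈ I ↔ (i < n ∧ FinsetInitSeg (E i) (E j)) := by
        intro i
        rw [hIdef, Finset.mem_filter, Finset.mem_range]
        constructor
        · rintro ⟨hi, hinit⟩
          refine ⟨hi, ?_⟩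
          rcases NB.initseg_comp hinit hjG with h2 | h2
          · exact h2
          · by_cases he : E j = E i
            · rw [he]
              exact NB.initseg_refl _
            · exfalso
              have := hadm j i h2 he
              have : i ≤ j := Finset.le_max' I i (Finset.mem_filter.mpr
                ⟨Finset.mem_range.mpr hi, hinit⟩)
              omega
        · rintro ⟨hi, hinit⟩
          exact ⟨hi, NB.initseg_trans hinit hjG⟩
      have hcap : ∀ i, FinsetInitSeg (E i) (E j) → i < n := by
        intro i hi
        by_cases he : E i = E j
        · have : i = j := hE2 he
          subst this
          exact Finset.mem_range.mp (Finset.mem_filter.mp hjI).1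
        · have h1 := hadm i j hi he
          have h2 : j < n := Finset.mem_range.mp (Finset.mem_filter.mp hjI).1
          omega
      refine ⟨E j, hE1 j, hjG, ?_, ?_⟩
      · rintro D hD ⟨i, rfl, hi⟩
        have : i ∈ I := Finset.mem_filter.mpr ⟨Finset.mem_range.mpr hi, hD⟩
        exact ((hmem i).mp this).2
      · rw [heval]
        have hIJ : (Finset.range n).filter (fun i => FinsetInitSeg (E i) G.1)
            = (Finset.range n).filter (fun i => FinsetInitSeg (E i) (E j)) := by
          ext i
          rw [← hIdef, hmem i, Finset.mem_filter, Finset.mem_range]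
        rw [hIJ]
        exact hJ (E j).card (E j) (hE1 j) rfl n hcap
    -- convergence
    have hconv : Filter.Tendsto (fun n => ∑ i ∈ Finset.range n, a i • χ (E i))
        Filter.atTop (nhds g) := by
      rw [Metric.tendsto_atTop]
      intro ε hε
      obtain ⟨M, hM⟩ := NB.oscillation _ hcs g (by positivity : (0:ℝ) < ε / 2)
      set n₀ := ((Finset.range (M + 1)).powerset.sup
        (fun F => if hF : F ∈ S α then (hE3 F hF).choose else 0)) + 1 with hn₀def
      refine ⟨max n₀ 1, fun n hn => ?_⟩
      have hn1 : 1 ≤ n := le_trans (le_max_right _ _) hn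
      have hnn₀ : n₀ ≤ n := le_trans (le_max_left _ _) hn
      rw [dist_eq_norm]
      have hb : ∀ G : {F : Finset ℕ // F ∈ S α},
          |((∑ i ∈ Finset.range n, a i • χ (E i)) - g) G| ≤ ε / 2 := by
        intro G
        obtain ⟨H, hH, hHG, hmax, hval⟩ := hPn n hn1 G
        set D := G.1 ∩ Finset.range (M + 1) with hDdef
        have hD : D ∈ S α := hher _ G.2 _ (NB.initseg_inter_range _ _)
        have hDsub : D ⊆ Finset.range (M + 1) := Finset.inter_subset_right
        have hidx : (hE3 D hD).choose < n := by
          have h1 : (fun F => if hF : F ∈ S α then (hE3 F hF).choose else 0) D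
              ≤ (Finset.range (M + 1)).powerset.sup
                (fun F => if hF : F ∈ S α then (hE3 F hF).choose else 0) :=
            Finset.le_sup (f := fun F => if hF : F ∈ S α then (hE3 F hF).choose else 0)
              (Finset.mem_powerset.mpr hDsub)
          simp only [dif_pos hD] at h1
          omega
        have hDH : FinsetInitSeg D H :=
          hmax D (NB.initseg_inter_range _ _) ⟨_, (hE3 D hD).choose_spec, hidx⟩
        have hagree : ∀ m ≤ M, (m ∈ H ↔ m ∈ G.1) := by
          intro m hm
          constructor
          · exact fun hmm => hHG.1 hmm
          · intro hmm
            exact hDH.1 (Finset.mem_inter.mpr ⟨hmm, Finset.mem_range.mpr (by omega)⟩)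
        have h2 := hM ⟨H, hH⟩ G hagree
        have h3 : ((∑ i ∈ Finset.range n, a i • χ (E i)) - g) G
            = g ⟨H, hH⟩ - g G := by
          simp only [BoundedContinuousFunction.coe_sub, Pi.sub_apply, hval]
        rw [h3]
        exact h2
      have h4 : ‖(∑ i ∈ Finset.range n, a i • χ (E i)) - g‖ ≤ ε / 2 :=
        (BoundedContinuousFunction.norm_le (by positivity)).mpr
          (fun G => by rw [Real.norm_eq_abs]; exact hb G)
      linarith
    -- coefficient functional: determined by the limit
    have hdet : ∀ (c : ℕ → ℝ),
        Filter.Tendsto (fun n => ∑ i ∈ Finset.range n, c i • χ (E i))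
          Filter.atTop (nhds g) →
        ∀ j, c j = g ⟨E j, hE1 j⟩ -
          ∑ i ∈ (Finset.range j).filter (fun i => FinsetInitSeg (E i) (E j)), c i := by
      intro c hc j
      have hev : Filter.Tendsto
          (fun n => (∑ i ∈ Finset.range n, c i • χ (E i)) ⟨E j, hE1 j⟩)
          Filter.atTop (nhds (g ⟨E j, hE1 j⟩)) :=
        ((continuous_eval_const _).tendsto g).comp hc
      have hconst : ∀ n ≥ j + 1,
          (∑ i ∈ Finset.range n, c i • χ (E i)) ⟨E j, hE1 j⟩
            = ∑ i ∈ (Finset.range (j + 1)).filter (fun i => FinsetInitSeg (E i) (E j)), c i := by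
        intro n hn
        rw [heval]
        apply Finset.sum_congr _ (fun _ _ => rfl)
        ext i
        simp only [Finset.mem_filter, Finset.mem_range]
        constructor
        · rintro ⟨hi, hinit⟩
          refine ⟨?_, hinit⟩
          by_cases he : E i = E j
          · have := hE2 he
            omega
          · have := hadm i j hinit he
            omega
        · rintro ⟨hi, hinit⟩
          refine ⟨?_, hinit⟩
          by_cases he : E i = E j
          · have := hE2 he
            omega
          · have := hadm i j hinit he
            omega
      have hlim : (∑ i ∈ (Finset.range (j + 1)).filter
            (fun i => FinsetInitSeg (E i) (E j)), c i) = g ⟨E j, hE1 j⟩ := by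
        refine tendsto_nhds_unique ?_ hev
        refine Filter.Tendsto.congr' ?_ tendsto_const_nhds
        filter_upwards [Filter.eventually_ge_atTop (j + 1)] with n hn
        exact (hconst n hn).symm
      have hjin : j ∈ (Finset.range (j + 1)).filter (fun i => FinsetInitSeg (E i) (E j)) :=
        Finset.mem_filter.mpr ⟨Finset.mem_range.mpr (by omega), NB.initseg_refl _⟩
      have hsp : (Finset.range (j + 1)).filter (fun i => FinsetInitSeg (E i) (E j))
          = insert j ((Finset.range j).filter (fun i => FinsetInitSeg (E i) (E j))) := by
        rw [Finset.range_add_one, Finset.filter_insert, if_pos (NB.initseg_refl _)]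
      rw [hsp, Finset.sum_insert (by simp)] at hlim
      linarith [hlim]
    refine ⟨a, hconv, ?_⟩
    intro b hb
    funext j
    induction j using Nat.strong_induction_on with
    | _ j IH =>
      rw [hdet b hb j, hdet a hconv j]
      congr 1
      apply Finset.sum_congr rfl
      intro i hi
      exact IH i (Finset.mem_range.mp (Finset.mem_filter.mp hi).1)
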